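/- arXiv:1904.10568 — 5 statements merged into one kernel-verified Lean document; each statement's English description precedes it below -/
import Mathlib

section
/- Let n ≥ 1, A ∈ ℂ^{n×n}, t ∈ ℝ, and A(t) = cos(t)·H + sin(t)·K where H = (A + A*)/2 and K = (A − A*)/(2i). Let λ ∈ ℝ be the largest eigenvalue of the Hermitian matrix A(t). Then λ = sup { Re(e^{−it} z) : z ∈ F(A) }, and this supremum is attained at some point of F(A). -/
open Matrix

/-- The quadratic form x*Ax = ⟨x, Ax⟩ for A ∈ ℂ^{n×n} and x ∈ ℂⁿ. -/
noncomputable def qf {n : ℕ} (A : Matrix (Fin n) (Fin n) ℂ) (x : EuclideanSpace ℂ (Fin n)) : ℂ :=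
  inner ℂ x (Matrix.toEuclideanLin A x)

/-- The field of values (numerical range) F(A) = { x*Ax : ‖x‖ = 1 }. -/
noncomputable def numericalRange {n : ℕ} (A : Matrix (Fin n) (Fin n) ℂ) : Set ℂ :=
  { z | ∃ x : EuclideanSpace ℂ (Fin n), ‖x‖ = 1 ∧ qf A x = z }

/-- The Hermitian part H = (A + A*)/2. -/
noncomputable def hermPart {n : ℕ} (A : Matrix (Fin n) (Fin n) ℂ) : Matrix (Fin n) (Fin n) ℂ :=
  (2 : ℂ)⁻¹ • (A + Aᴴ)

/-- The skew part K = (A − A*)/(2i). -/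
noncomputable def skewPart {n : ℕ} (A : Matrix (Fin n) (Fin n) ℂ) : Matrix (Fin n) (Fin n) ℂ :=
  (2 * Complex.I)⁻¹ • (A - Aᴴ)

/-- The Hermitian matrix flow A(t) = cos(t)·H + sin(t)·K. -/
noncomputable def matFlow {n : ℕ} (A : Matrix (Fin n) (Fin n) ℂ) (t : ℝ) : Matrix (Fin n) (Fin n) ℂ :=
  (Real.cos t : ℂ) • hermPart A + (Real.sin t : ℂ) • skewPart A

lemma qf_smul {n : ℕ} (c : ℂ) (A : Matrix (Fin n) (Fin n) ℂ) (x : EuclideanSpace ℂ (Fin n)) :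
    qf (c • A) x = c * qf A x := by
  simp [qf, _root_.map_smul, inner_smul_right]

lemma qf_add {n : ℕ} (A B : Matrix (Fin n) (Fin n) ℂ) (x : EuclideanSpace ℂ (Fin n)) :
    qf (A + B) x = qf A x + qf B x := by
  simp [qf, map_add, inner_add_right]

lemma qf_sub {n : ℕ} (A B : Matrix (Fin n) (Fin n) ℂ) (x : EuclideanSpace ℂ (Fin n)) :
    qf (A - B) x = qf A x - qf B x := by
  simp [qf, map_sub, inner_sub_right]

lemma qf_conjT {n : ℕ} (A : Matrix (Fin n) (Fin n) ℂ) (x : EuclideanSpace ℂ (Fin n)) :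
    qf Aᴴ x = (starRingEnd ℂ) (qf A x) := by
  rw [qf, Matrix.toEuclideanLin_conjTranspose_eq_adjoint, LinearMap.adjoint_inner_right, qf,
    ← inner_conj_symm]

lemma flow_re {n : ℕ} (A : Matrix (Fin n) (Fin n) ℂ) (t : ℝ) (x : EuclideanSpace ℂ (Fin n)) :
    (qf (matFlow A t) x).re = (Complex.exp (-(Complex.I * t)) * qf A x).re := by
  have hexp : Complex.exp (-(Complex.I * t)) = Complex.cos t - Complex.sin t * Complex.I := by
    rw [show -(Complex.I * (t:ℂ)) = (-(t:ℂ)) * Complex.I by ring, Complex.exp_mul_I,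
      Complex.cos_neg, Complex.sin_neg]
    ring
  rw [hexp, matFlow, qf_add, hermPart, skewPart, qf_smul, qf_smul, qf_smul, qf_smul, qf_add,
    qf_sub, qf_conjT]
  set z := qf A x
  rw [Complex.add_conj, Complex.sub_conj, ← Complex.ofReal_cos, ← Complex.ofReal_sin]
  push_cast
  have h1 : (2 * Complex.I)⁻¹ * (2 * (z.im:ℂ) * Complex.I) = (z.im : ℂ) := by
    field_simp
  rw [h1]
  have h2 : (2:ℂ)⁻¹ * (2 * (z.re:ℂ)) = (z.re : ℂ) := by ring
  rw [h2]
  simp [Complex.mul_re, Complex.sub_re, Complex.sub_im]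

/-- the largest eigenvalue λ of the Hermitian matrix A(t) equals
sup { Re(e^{−it}z) : z ∈ F(A) }, and the supremum is attained. -/
theorem largest_eigenvalue_eq_max_support (n : ℕ) (hn : 1 ≤ n)
    (A : Matrix (Fin n) (Fin n) ℂ) (t : ℝ) (lam : ℝ)
    (hlam : IsGreatest {r : ℝ | (r : ℂ) ∈ spectrum ℂ (matFlow A t)} lam) :
    IsGreatest ((fun z => (Complex.exp (-(Complex.I * t)) * z).re) '' numericalRange A) lam := by
  classical
  set M := matFlow A t with hMdef
  have hM : M.IsHermitian := by
    have hH : (hermPart A)ᴴ = hermPart A := by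
      unfold hermPart
      rw [Matrix.conjTranspose_smul, Matrix.conjTranspose_add, Matrix.conjTranspose_conjTranspose]
      rw [show star ((2:ℂ))⁻¹ = ((2:ℂ))⁻¹ by simp, add_comm]
    have hK : (skewPart A)ᴴ = skewPart A := by
      unfold skewPart
      rw [Matrix.conjTranspose_smul, Matrix.conjTranspose_sub, Matrix.conjTranspose_conjTranspose]
      rw [show star ((2 * Complex.I))⁻¹ = -(2 * Complex.I)⁻¹ by
        simp [star_inv₀, star_mul', Complex.star_def, Complex.conj_I, mul_neg, inv_neg]]
      rw [show Aᴴ - A = -(A - Aᴴ) by abel]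
      rw [neg_smul, smul_neg, neg_neg]
    show (matFlow A t)ᴴ = matFlow A t
    unfold matFlow
    rw [Matrix.conjTranspose_add, Matrix.conjTranspose_smul, Matrix.conjTranspose_smul, hH, hK]
    simp only [Complex.star_def, Complex.conj_ofReal]
  constructor
  · -- attainment
    have hspec : (lam : ℂ) ∈ spectrum ℂ M := hlam.1
    rw [← Matrix.spectrum_toEuclideanLin] at hspec
    have hev : Module.End.HasEigenvalue (Matrix.toEuclideanLin M) (lam : ℂ) :=
      Module.End.hasEigenvalue_iff_mem_spectrum.mpr hspec
    obtain ⟨x, hx⟩ := hev.exists_hasEigenvector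
    have hx0 : ‖x‖ ≠ 0 := norm_ne_zero_iff.mpr hx.2
    set y : EuclideanSpace ℂ (Fin n) := ((‖x‖ : ℂ))⁻¹ • x with hy_def
    have hy : ‖y‖ = 1 := by
      simp [hy_def, norm_smul]
      field_simp
    have hTy : Matrix.toEuclideanLin M y = (lam : ℂ) • y := by
      simp only [hy_def, _root_.map_smul, hx.apply_eq_smul]
      rw [smul_comm]
    have hq : qf M y = (lam : ℂ) := by
      rw [qf, hTy, inner_smul_right, inner_self_eq_norm_sq_to_K, hy]
      simp
    refine ⟨qf A y, ⟨y, hy, rfl⟩, ?_⟩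
    show (Complex.exp (-(Complex.I * t)) * qf A y).re = lam
    rw [← flow_re, hq]
    simp
  · -- upper bound
    rintro r ⟨z, ⟨x, hx, rfl⟩, rfl⟩
    simp only
    rw [← flow_re]
    set b := hM.eigenvectorBasis with hb
    set μ := hM.eigenvalues with hmu
    have hTb : ∀ i, Matrix.toEuclideanLin M (b i) = ((μ i : ℂ)) • b i := by
      intro i
      have := hM.mulVec_eigenvectorBasis i
      apply (WithLp.equiv 2 (Fin n → ℂ)).injective
      simp only [WithLp.equiv_apply, Matrix.ofLp_toEuclideanLin_apply]
      rw [this]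
      ext j
      simp [Complex.real_smul]
      rfl
    have hxsum : x = ∑ i, (inner ℂ (b i) x : ℂ) • b i := (b.sum_repr' x).symm
    have key : qf M x = ∑ i, ((μ i : ℂ)) * Complex.normSq (inner ℂ (b i) x : ℂ) := by
      rw [qf]
      nth_rewrite 2 [hxsum]
      rw [map_sum, inner_sum]
      refine Finset.sum_congr rfl fun i _ => ?_
      rw [_root_.map_smul, hTb i, inner_smul_right, inner_smul_right,
        ← inner_conj_symm x (b i), mul_left_comm, Complex.mul_conj]
    have hnorm : (1:ℝ) = ∑ i, Complex.normSq (inner ℂ (b i) x : ℂ) := by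
      have : (inner ℂ x x : ℂ) = ∑ i, (Complex.normSq (inner ℂ (b i) x : ℂ) : ℂ) := by
        nth_rewrite 2 [hxsum]
        rw [inner_sum]
        refine Finset.sum_congr rfl fun i _ => ?_
        rw [inner_smul_right, ← inner_conj_symm x (b i), Complex.mul_conj]
      have h2 : (inner ℂ x x : ℂ) = 1 := by
        rw [inner_self_eq_norm_sq_to_K, hx]; simp
      have := congrArg Complex.re (h2.symm.trans this)
      simpa using this
    have hle : ∀ i, μ i ≤ lam := by
      intro i
      apply hlam.2
      have : μ i ∈ spectrum ℝ M := hM.eigenvalues_mem_spectrum_real i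
      have := spectrum.algebraMap_mem ℂ this
      simpa using this
    calc (qf M x).re = ∑ i, μ i * Complex.normSq (inner ℂ (b i) x : ℂ) := by
          rw [key]; simp [Complex.normSq_nonneg]
      _ ≤ ∑ i, lam * Complex.normSq (inner ℂ (b i) x : ℂ) := by
          apply Finset.sum_le_sum
          intro i _
          exact mul_le_mul_of_nonneg_right (hle i) (Complex.normSq_nonneg _)
      _ = lam * ∑ i, Complex.normSq (inner ℂ (b i) x : ℂ) := by rw [Finset.mul_sum]
      _ = lam := by rw [← hnorm, mul_one]
end

section
/- Let n ≥ 1, A ∈ ℂ^{n×n}, t ∈ ℝ, and A(t) = cos(t)·H + sin(t)·K where H = (A + A*)/2 and K = (A − A*)/(2i). Suppose x ∈ ℂⁿ is a unit vector with A(t)x = λx, where λ ∈ ℝ is the largest eigenvalue of the Hermitian matrix A(t). Then x*Ax lies on the boundary of the field of values, i.e. x*Ax ∈ frontier F(A) (the topological frontier of F(A) as a subset of ℂ). -/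
open Matrix

lemma qf_conj {n : ℕ} (A : Matrix (Fin n) (Fin n) ℂ) (y : EuclideanSpace ℂ (Fin n)) :
    qf Aᴴ y = starRingEnd ℂ (qf A y) := by
  rw [qf, qf, Matrix.toEuclideanLin_apply, Matrix.toEuclideanLin_apply,
    EuclideanSpace.inner_eq_star_dotProduct, EuclideanSpace.inner_eq_star_dotProduct]
  simp only [WithLp.ofLp_toLp]
  rw [show (starRingEnd ℂ) (dotProduct (A *ᵥ WithLp.ofLp y) (star (WithLp.ofLp y)))
      = star (dotProduct (A *ᵥ WithLp.ofLp y) (star (WithLp.ofLp y))) from rfl]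
  rw [← Matrix.dotProduct_star, Matrix.star_mulVec, dotProduct_comm, Matrix.dotProduct_mulVec,
    dotProduct_comm]

lemma matFlow_isHermitian {n : ℕ} (A : Matrix (Fin n) (Fin n) ℂ) (t : ℝ) :
    (matFlow A t).IsHermitian := by
  ext i j
  simp only [matFlow, hermPart, skewPart, Matrix.conjTranspose_apply, Matrix.add_apply,
    Matrix.smul_apply, Matrix.sub_apply, smul_eq_mul, Complex.star_def, map_add,
    _root_.map_mul, map_sub, map_inv₀, Complex.conj_ofReal, map_ofNat, Complex.conj_I,
    Complex.conj_conj]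
  ring

lemma qf_matFlow {n : ℕ} (A : Matrix (Fin n) (Fin n) ℂ) (t : ℝ) (y : EuclideanSpace ℂ (Fin n)) :
    qf (matFlow A t) y =
      ((Real.cos t * (qf A y).re + Real.sin t * (qf A y).im : ℝ) : ℂ) := by
  have hH : qf (hermPart A) y = ((qf A y).re : ℂ) := by
    rw [hermPart, qf, _root_.map_smul, map_add, LinearMap.smul_apply, LinearMap.add_apply,
      inner_smul_right, inner_add_right]
    rw [show ((inner ℂ y (Matrix.toEuclideanLin A y) : ℂ) + inner ℂ y (Matrix.toEuclideanLin Aᴴ y))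
        = qf A y + qf Aᴴ y from rfl, qf_conj]
    rw [Complex.add_conj]
    push_cast
    ring
  have hK : qf (skewPart A) y = ((qf A y).im : ℂ) := by
    rw [skewPart, qf, _root_.map_smul, map_sub, LinearMap.smul_apply, LinearMap.sub_apply,
      inner_smul_right, inner_sub_right]
    rw [show ((inner ℂ y (Matrix.toEuclideanLin A y) : ℂ) - inner ℂ y (Matrix.toEuclideanLin Aᴴ y))
        = qf A y - qf Aᴴ y from rfl, qf_conj]
    rw [Complex.sub_conj]
    have hI : Complex.I ≠ 0 := Complex.I_ne_zero
    field_simp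
    norm_num
  rw [matFlow, qf, map_add, _root_.map_smul, _root_.map_smul, LinearMap.add_apply,
    LinearMap.smul_apply, LinearMap.smul_apply, inner_add_right, inner_smul_right,
    inner_smul_right]
  rw [show ((inner ℂ y (Matrix.toEuclideanLin (hermPart A) y)) : ℂ) = qf (hermPart A) y from rfl,
    show ((inner ℂ y (Matrix.toEuclideanLin (skewPart A) y)) : ℂ) = qf (skewPart A) y from rfl,
    hH, hK]
  push_cast
  ring

lemma qf_re_le_lam {n : ℕ} (B : Matrix (Fin n) (Fin n) ℂ) (hB : B.IsHermitian) (lam : ℝ)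
    (hub : ∀ r : ℝ, (r : ℂ) ∈ spectrum ℂ B → r ≤ lam)
    (y : EuclideanSpace ℂ (Fin n)) (hy : ‖y‖ = 1) :
    (qf B y).re ≤ lam := by
  classical
  set b := hB.eigenvectorBasis with hb
  have hTb : ∀ i, Matrix.toEuclideanLin B (b i) = (hB.eigenvalues i : ℂ) • b i := by
    intro i
    have h := hB.mulVec_eigenvectorBasis i
    rw [Matrix.toEuclideanLin_apply]
    ext j
    have := congrFun h j
    simpa [Complex.real_smul] using this
  have heigle : ∀ i, hB.eigenvalues i ≤ lam := by
    intro i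
    apply hub
    rw [← Matrix.spectrum_toEuclideanLin]
    exact (Module.End.hasEigenvalue_of_hasEigenvector
      ⟨Module.End.mem_eigenspace_iff.2 (hTb i), b.orthonormal.ne_zero i⟩).mem_spectrum
  have hexp : qf B y = ∑ i, (hB.eigenvalues i : ℂ) * ((inner ℂ y (b i) : ℂ) * inner ℂ (b i) y) := by
    rw [qf, ← b.sum_inner_mul_inner y (Matrix.toEuclideanLin B y)]
    apply Finset.sum_congr rfl
    intro i _
    rw [← (Matrix.isHermitian_iff_isSymmetric.1 hB) (b i) y, hTb i, inner_smul_left]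
    rw [Complex.conj_ofReal]
    ring
  have hprod : ∀ i, ((inner ℂ y (b i) : ℂ) * inner ℂ (b i) y) = (Complex.normSq (inner ℂ (b i) y) : ℂ) := by
    intro i
    rw [← inner_conj_symm (b i) y, Complex.normSq_eq_conj_mul_self, Complex.conj_conj]
  have hre : (qf B y).re = ∑ i, hB.eigenvalues i * Complex.normSq (inner ℂ (b i) y) := by
    rw [hexp, Complex.re_sum]
    apply Finset.sum_congr rfl
    intro i _
    rw [hprod i, ← Complex.ofReal_mul, Complex.ofReal_re]
  have hsum1 : ∑ i, Complex.normSq ((inner ℂ (b i) y : ℂ)) = 1 := by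
    have h := b.sum_inner_mul_inner y y
    have h2 : (inner ℂ y y : ℂ) = 1 := by
      rw [inner_self_eq_norm_sq_to_K, hy]; norm_num
    rw [h2] at h
    have h3 := congrArg Complex.re h
    rw [Complex.re_sum] at h3
    simp only [Complex.one_re] at h3
    rw [← h3]
    apply Finset.sum_congr rfl
    intro i _
    rw [hprod i, Complex.ofReal_re]
  rw [hre]
  calc ∑ i, hB.eigenvalues i * Complex.normSq ((inner ℂ (b i) y : ℂ))
      ≤ ∑ i, lam * Complex.normSq ((inner ℂ (b i) y : ℂ)) := by
        apply Finset.sum_le_sum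
        intro i _
        exact mul_le_mul_of_nonneg_right (heigle i) (Complex.normSq_nonneg _)
    _ = lam := by rw [← Finset.mul_sum, hsum1, mul_one]

/-- if x is a unit eigenvector of A(t) for its largest eigenvalue λ, then
x*Ax lies on the boundary (topological frontier) of F(A). -/
theorem eigenvector_point_on_boundary (n : ℕ) (hn : 1 ≤ n)
    (A : Matrix (Fin n) (Fin n) ℂ) (t : ℝ) (lam : ℝ)
    (hlam : IsGreatest {r : ℝ | (r : ℂ) ∈ spectrum ℂ (matFlow A t)} lam)
    (x : EuclideanSpace ℂ (Fin n)) (hx : ‖x‖ = 1)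
    (heig : Matrix.toEuclideanLin (matFlow A t) x = (lam : ℂ) • x) :
    qf A x ∈ frontier (numericalRange A) := by
  have hmemS : qf A x ∈ numericalRange A := ⟨x, hx, rfl⟩
  have hub : ∀ z ∈ numericalRange A, Real.cos t * z.re + Real.sin t * z.im ≤ lam := by
    rintro z ⟨y, hy, rfl⟩
    have h := qf_re_le_lam _ (matFlow_isHermitian A t) lam (fun r hr => hlam.2 hr) y hy
    rw [qf_matFlow, Complex.ofReal_re] at h
    exact h
  have heq : Real.cos t * (qf A x).re + Real.sin t * (qf A x).im = lam := by
    have h1 : qf (matFlow A t) x = (lam : ℂ) := by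
      rw [qf, heig, inner_smul_right, inner_self_eq_norm_sq_to_K, hx]
      norm_num
    have h2 := qf_matFlow A t x
    rw [h1] at h2
    exact_mod_cast h2.symm
  refine ⟨subset_closure hmemS, ?_⟩
  intro hint
  obtain ⟨ε, hε, hball⟩ := Metric.mem_nhds_iff.1 (mem_interior_iff_mem_nhds.1 hint)
  set c : ℂ := (Real.cos t : ℂ) + (Real.sin t : ℂ) * Complex.I with hc
  have habs : ‖c‖ = 1 := by
    rw [hc, Complex.ofReal_cos, Complex.ofReal_sin]
    exact Complex.norm_cos_add_sin_mul_I t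
  set w : ℂ := qf A x + (ε / 2 : ℝ) * c with hw
  have hwS : w ∈ numericalRange A := by
    apply hball
    rw [Metric.mem_ball, dist_eq_norm]
    have : w - qf A x = (ε / 2 : ℝ) * c := by rw [hw]; ring
    rw [this]
    rw [norm_mul, habs, mul_one, Complex.norm_real, Real.norm_eq_abs,
      abs_of_nonneg (by linarith : (0:ℝ) ≤ ε / 2)]
    linarith
  have hle := hub w hwS
  have hwre : w.re = (qf A x).re + ε / 2 * Real.cos t := by
    simp [hw, hc, Complex.add_re, Complex.mul_re, Complex.cos_ofReal_re, Complex.sin_ofReal_re]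
  have hwim : w.im = (qf A x).im + ε / 2 * Real.sin t := by
    simp [hw, hc, Complex.add_im, Complex.mul_im, Complex.cos_ofReal_re, Complex.sin_ofReal_re]
  rw [hwre, hwim] at hle
  nlinarith [Real.sin_sq_add_cos_sq t, heq, hε]
end

section
/- (Toeplitz–Hausdorff) For every n ≥ 1 and every A ∈ ℂ^{n×n}, the field of values F(A) is a convex subset of ℂ. -/
open Matrix

lemma qf_expand {n : ℕ} (A : Matrix (Fin n) (Fin n) ℂ) (a b : ℂ)
    (x y : EuclideanSpace ℂ (Fin n)) :
    qf A (a • x + b • y)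
      = (starRingEnd ℂ) a * a * qf A x + (starRingEnd ℂ) a * b * inner ℂ x (Matrix.toEuclideanLin A y)
        + (starRingEnd ℂ) b * a * inner ℂ y (Matrix.toEuclideanLin A x)
        + (starRingEnd ℂ) b * b * qf A y := by
  simp [qf, inner_add_left, inner_add_right, inner_smul_left, inner_smul_right, map_add,
    _root_.map_smul]
  ring

lemma phase (a b : ℂ) : ∃ ω : ℂ, ‖ω‖ = 1 ∧ (ω * a + (starRingEnd ℂ) ω * b).im = 0 := by
  have him : ∀ ω : ℂ, (ω * a + (starRingEnd ℂ) ω * b).im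
      = (ω * (a - (starRingEnd ℂ) b)).im := by
    intro ω
    have hsplit : ω * a + (starRingEnd ℂ) ω * b
        = ω * (a - (starRingEnd ℂ) b)
          + (ω * (starRingEnd ℂ) b + (starRingEnd ℂ) (ω * (starRingEnd ℂ) b)) := by
      rw [RingHom.map_mul, Complex.conj_conj]
      ring
    rw [hsplit]
    simp only [Complex.add_im, Complex.mul_im, Complex.conj_re, Complex.conj_im]
    ring
  by_cases hu : a - (starRingEnd ℂ) b = 0
  · exact ⟨1, norm_one, by rw [him]; simp [hu]⟩
  · set u := a - (starRingEnd ℂ) b with hu'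
    refine ⟨(starRingEnd ℂ) u * ((‖u‖ : ℝ) : ℂ)⁻¹, ?_, ?_⟩
    · rw [norm_mul, norm_inv, RCLike.norm_conj]
      rw [Complex.norm_real, Real.norm_eq_abs, abs_norm]
      field_simp [norm_ne_zero_iff.mpr hu]
    · rw [him]
      have h5 : (starRingEnd ℂ) u * ((‖u‖ : ℝ) : ℂ)⁻¹ * u
          = ((Complex.normSq u : ℝ) : ℂ) * (((‖u‖ : ℝ) : ℂ))⁻¹ := by
        linear_combination (((‖u‖ : ℝ) : ℂ))⁻¹ * Complex.mul_conj u
      rw [h5, ← Complex.ofReal_inv, ← Complex.ofReal_mul]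
      exact Complex.ofReal_im _

lemma key {n : ℕ} (B : Matrix (Fin n) (Fin n) ℂ) (x y : EuclideanSpace ℂ (Fin n))
    (hx : ‖x‖ = 1) (hy : ‖y‖ = 1) (h0 : qf B x = 0) (h1 : qf B y = 1)
    (t : ℝ) (ht : t ∈ Set.Icc (0:ℝ) 1) :
    ∃ v : EuclideanSpace ℂ (Fin n), ‖v‖ = 1 ∧ qf B v = (t : ℂ) := by
  set a : ℂ := inner ℂ x (Matrix.toEuclideanLin B y) with ha
  set b : ℂ := inner ℂ y (Matrix.toEuclideanLin B x) with hb
  obtain ⟨ω, hω1, hωim⟩ := phase a b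
  have hωω : ω * (starRingEnd ℂ) ω = 1 := by
    rw [Complex.mul_conj]
    rw [Complex.normSq_eq_norm_sq, hω1]
    norm_num
  have h1' : (inner ℂ y (Matrix.toEuclideanLin B y) : ℂ) = 1 := h1
  have hqy : qf B (ω • y) = 1 := by
    simp only [qf, _root_.map_smul, inner_smul_left, inner_smul_right, ← mul_assoc]
    rw [hωω, one_mul, h1']
  set c : ℝ := (ω * a + (starRingEnd ℂ) ω * b).re with hcdef
  have hc : ω * a + (starRingEnd ℂ) ω * b = (c : ℂ) := by
    apply Complex.ext <;> simp [hcdef, hωim]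
  set p : ℝ → EuclideanSpace ℂ (Fin n) :=
    fun s => ((1 - s : ℝ) : ℂ) • x + ((s : ℝ) : ℂ) • (ω • y) with hp
  have hqfp : ∀ s : ℝ, qf B (p s) = ((s * (1 - s) * c + s ^ 2 : ℝ) : ℂ) := by
    intro s
    simp only [hp]
    rw [qf_expand]
    have e1 : (inner ℂ x (Matrix.toEuclideanLin B (ω • y)) : ℂ) = ω * a := by
      rw [_root_.map_smul, inner_smul_right]
    have e2 : (inner ℂ (ω • y) (Matrix.toEuclideanLin B x) : ℂ) = (starRingEnd ℂ) ω * b := by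
      rw [inner_smul_left]
    rw [e1, e2, h0, hqy]
    simp only [Complex.conj_ofReal]
    push_cast
    linear_combination ((s : ℂ) * (1 - (s : ℂ))) * hc
  have hpne : ∀ s ∈ Set.Icc (0:ℝ) 1, p s ≠ 0 := by
    intro s hs h
    simp only [hp] at h
    have hneg : ((1 - s : ℝ) : ℂ) • x = -(((s : ℝ) : ℂ) • (ω • y)) := by
      rw [eq_neg_iff_add_eq_zero]; exact h
    have hn : ‖((1 - s : ℝ) : ℂ) • x‖ = ‖((s : ℝ) : ℂ) • (ω • y)‖ := by
      rw [hneg, norm_neg]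
    simp only [norm_smul, hx, hy, hω1, Complex.norm_real, Real.norm_eq_abs, mul_one] at hn
    have hs2 : s = 1/2 := by
      rw [abs_of_nonneg (by linarith [hs.1, hs.2]), abs_of_nonneg hs.1] at hn; linarith
    rw [hs2] at h
    have e : ((1 - (1/2 : ℝ) : ℝ) : ℂ) = (2 : ℂ)⁻¹ := by norm_num
    have e2 : (((1/2 : ℝ) : ℝ) : ℂ) = (2 : ℂ)⁻¹ := by norm_num
    rw [e, e2, ← smul_add] at h
    have h2 : x + ω • y = 0 := by
      have h3 := congrArg (fun v : EuclideanSpace ℂ (Fin n) => (2 : ℂ) • v) h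
      simpa [smul_smul] using h3
    have hx2 : x = -(ω • y) := by rwa [add_eq_zero_iff_eq_neg] at h2
    rw [hx2] at h0
    have hneg2 : qf B (-(ω • y)) = qf B (ω • y) := by
      simp [qf, inner_neg_left, inner_neg_right, map_neg]
      rw [inner_smul_left, inner_smul_right]; ring
    rw [hneg2, hqy] at h0
    exact one_ne_zero h0
  have hpcont : Continuous p := by
    simp only [hp]; fun_prop
  have hdcont : Continuous fun s => ‖p s‖ ^ 2 := (hpcont.norm.pow 2)
  set g : ℝ → ℝ := fun s => (s * (1 - s) * c + s ^ 2) / ‖p s‖ ^ 2 with hg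
  have hgcont : ContinuousOn g (Set.Icc 0 1) := by
    apply ContinuousOn.div
    · fun_prop
    · exact hdcont.continuousOn
    · intro s hs
      exact pow_ne_zero 2 (norm_ne_zero_iff.mpr (hpne s hs))
  have hg0 : g 0 = 0 := by simp [hg]
  have hg1 : g 1 = 1 := by
    have hp1 : p 1 = ω • y := by simp [hp]
    simp [hg, hp1, norm_smul, hω1, hy]
  obtain ⟨s₀, hs₀, hgs₀⟩ := intermediate_value_Icc zero_le_one hgcont
    (by rw [hg0, hg1]; exact ht)
  have hne : ‖p s₀‖ ≠ 0 := norm_ne_zero_iff.mpr (hpne s₀ hs₀)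
  refine ⟨((‖p s₀‖ : ℝ) : ℂ)⁻¹ • p s₀, ?_, ?_⟩
  · rw [norm_smul, norm_inv, Complex.norm_real, Real.norm_eq_abs, abs_norm]
    field_simp
  · have hnum : s₀ * (1 - s₀) * c + s₀ ^ 2 = t * ‖p s₀‖ ^ 2 := by
      rw [hg] at hgs₀
      field_simp at hgs₀
      linarith [hgs₀]
    simp only [qf, _root_.map_smul, inner_smul_left, inner_smul_right, Complex.conj_ofReal]
    have : (inner ℂ (p s₀) (Matrix.toEuclideanLin B (p s₀)) : ℂ)
        = ((s₀ * (1 - s₀) * c + s₀ ^ 2 : ℝ) : ℂ) := hqfp s₀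
    rw [map_inv₀, Complex.conj_ofReal, this, hnum]
    push_cast
    have hC : ((‖p s₀‖ : ℝ) : ℂ) ≠ 0 := Complex.ofReal_ne_zero.mpr hne
    field_simp

lemma qf_shift {n : ℕ} (A : Matrix (Fin n) (Fin n) ℂ) (d z : ℂ)
    (v : EuclideanSpace ℂ (Fin n)) (hv : ‖v‖ = 1) :
    qf (d • (A - z • (1 : Matrix (Fin n) (Fin n) ℂ))) v = d * (qf A v - z) := by
  have h1 : Matrix.toEuclideanLin (1 : Matrix (Fin n) (Fin n) ℂ) v = v := by
    simp [Matrix.toEuclideanLin_apply]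
  have hvv : (inner ℂ v v : ℂ) = 1 := by
    rw [inner_self_eq_norm_sq_to_K, hv]; norm_num
  simp [qf, _root_.map_smul, map_sub, inner_smul_right, inner_sub_right, h1, hvv, hv]

/-- Toeplitz–Hausdorff: the field of values F(A) is convex. -/
theorem numericalRange_convex (n : ℕ) (hn : 1 ≤ n) (A : Matrix (Fin n) (Fin n) ℂ) :
    Convex ℝ (numericalRange A) := by
  intro z₀ hz₀ z₁ hz₁ α β hα hβ hαβ
  obtain ⟨x, hx, hqx⟩ := hz₀
  obtain ⟨y, hy, hqy⟩ := hz₁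
  by_cases hz : z₀ = z₁
  · refine ⟨x, hx, ?_⟩
    subst hz
    rw [hqx, ← add_smul, hαβ, one_smul]
  · set d := z₁ - z₀ with hd
    have hdne : d ≠ 0 := sub_ne_zero.mpr (Ne.symm hz)
    set B := d⁻¹ • (A - z₀ • (1 : Matrix (Fin n) (Fin n) ℂ)) with hB
    have hBx : qf B x = 0 := by
      rw [hB, qf_shift A d⁻¹ z₀ x hx, hqx]; simp
    have hBy : qf B y = 1 := by
      rw [hB, qf_shift A d⁻¹ z₀ y hy, hqy, ← hd, inv_mul_cancel₀ hdne]
    have hβ1 : β ∈ Set.Icc (0:ℝ) 1 := ⟨hβ, by linarith⟩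
    obtain ⟨v, hv, hqv⟩ := key B x y hx hy hBx hBy β hβ1
    refine ⟨v, hv, ?_⟩
    rw [hB, qf_shift A d⁻¹ z₀ v hv] at hqv
    have h6 : qf A v - z₀ = (β : ℂ) * d := by
      rw [inv_mul_eq_div, div_eq_iff hdne] at hqv
      linear_combination hqv
    have hca : (α : ℂ) + (β : ℂ) = 1 := by exact_mod_cast congrArg Complex.ofReal hαβ
    simp only [Complex.real_smul, hd] at h6 ⊢
    linear_combination h6 - z₀ * hca
end

section
/- Let n ≥ 1 and let A ∈ ℂ^{n×n} be normal, i.e. A*A = AA*. Then the field of values of A equals the convex hull of the set of eigenvalues of A: F(A) = conv(spectrum(A)). -/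
open Matrix

open Matrix Module.End Finset
open scoped InnerProductSpace ComplexConjugate

variable {E : Type*} [NormedAddCommGroup E] [InnerProductSpace ℂ E]

lemma inner_sum_ortho {ι : Type*} [DecidableEq ι] (S : Finset ι) (v : ι → E)
    (hv : ∀ μ ∈ S, ∀ ν ∈ S, ⟪v μ, v ν⟫_ℂ = if μ = ν then 1 else 0) (c d : ι → ℂ) :
    ⟪∑ μ ∈ S, c μ • v μ, ∑ ν ∈ S, d ν • v ν⟫_ℂ = ∑ μ ∈ S, conj (c μ) * d μ := by
  rw [sum_inner]
  refine Finset.sum_congr rfl fun μ hμ => ?_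
  rw [inner_sum]
  have : ∀ ν ∈ S, ⟪c μ • v μ, d ν • v ν⟫_ℂ = if ν = μ then conj (c μ) * d μ else 0 := by
    intro ν hν
    rw [inner_smul_left, inner_smul_right, hv μ hμ ν hν]
    by_cases h : ν = μ
    · subst h; simp
    · simp [h, Ne.symm h]
  rw [Finset.sum_congr rfl this, Finset.sum_ite_eq' S μ (fun _ => conj (c μ) * d μ)]
  simp [hμ]

variable [FiniteDimensional ℂ E]

theorem aux_numRange (T : E →ₗ[ℂ] E)
    (hnormal : LinearMap.adjoint T * T = T * LinearMap.adjoint T)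
    (hfin : (spectrum ℂ T).Finite) :
    {z : ℂ | ∃ x : E, ‖x‖ = 1 ∧ ⟪x, T x⟫_ℂ = z} = convexHull ℝ (spectrum ℂ T) := by
  classical
  -- the adjoint: key facts
  set T' := LinearMap.adjoint T with hT'
  -- eigenvectors of T are eigenvectors of T'
  have key : ∀ (μ : ℂ) (x : E), T x = μ • x → T' x = conj μ • x := by
    intro μ x hx
    have hTT : T (T' x) = T' (T x) := by
      have := congrArg (fun f => f x) hnormal
      simpa [Module.End.mul_apply] using this.symm
    have h0 : ⟪T' x - conj μ • x, T' x - conj μ • x⟫_ℂ = 0 := by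
      rw [hT'] at hTT
      have h1 : ⟪T' x, T' x⟫_ℂ = conj μ * μ * ⟪x, x⟫_ℂ := by
        rw [hT', LinearMap.adjoint_inner_left, hTT, LinearMap.adjoint_inner_right,
          hx, inner_smul_left, inner_smul_right]
        ring
      have h2 : ⟪T' x, x⟫_ℂ = μ * ⟪x, x⟫_ℂ := by
        rw [hT', LinearMap.adjoint_inner_left, hx, inner_smul_right]
      have h3 : ⟪x, T' x⟫_ℂ = conj μ * ⟪x, x⟫_ℂ := by
        rw [hT', LinearMap.adjoint_inner_right, hx, inner_smul_left]
      simp only [inner_sub_left, inner_sub_right, inner_smul_left, inner_smul_right,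
        h1, h2, h3, Complex.conj_conj]
      ring
    have := inner_self_eq_zero.mp h0
    rwa [sub_eq_zero] at this
  -- orthogonality of distinct eigenspaces
  have orth : ∀ μ ν : ℂ, μ ≠ ν → ∀ x ∈ eigenspace T μ, ∀ y ∈ eigenspace T ν, ⟪x, y⟫_ℂ = 0 := by
    intro μ ν hμν x hx y hy
    have hx' := mem_eigenspace_iff.mp hx
    have hy' := mem_eigenspace_iff.mp hy
    have h1 : ⟪x, T y⟫_ℂ = ν * ⟪x, y⟫_ℂ := by rw [hy', inner_smul_right]
    have h2 : ⟪x, T y⟫_ℂ = μ * ⟪x, y⟫_ℂ := by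
      rw [← LinearMap.adjoint_inner_left, ← hT', key μ x hx', inner_smul_left, Complex.conj_conj]
    have := h1.symm.trans h2
    rcases mul_eq_mul_right_iff.mp this.symm with h | h
    · exact absurd h hμν
    · exact h
  -- symmetric parts
  set TH : E →ₗ[ℂ] E := (2 : ℂ)⁻¹ • (T + T') with hTH
  set TK : E →ₗ[ℂ] E := (2 * Complex.I)⁻¹ • (T - T') with hTK
  have hTHsym : TH.IsSymmetric := by
    intro x y
    simp only [hTH, LinearMap.smul_apply, LinearMap.add_apply, inner_smul_left, inner_smul_right,
      inner_add_left, inner_add_right, hT', LinearMap.adjoint_inner_left,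
      LinearMap.adjoint_inner_right]
    rw [map_inv₀, Complex.conj_ofNat]
    ring
  have hTKsym : TK.IsSymmetric := by
    intro x y
    simp only [hTK, LinearMap.smul_apply, LinearMap.sub_apply, inner_smul_left, inner_smul_right,
      inner_sub_left, inner_sub_right, hT', LinearMap.adjoint_inner_left,
      LinearMap.adjoint_inner_right]
    have : conj ((2 * Complex.I)⁻¹) = -(2 * Complex.I)⁻¹ := by
      simp [Complex.ext_iff]
    rw [this]
    ring
  have hcomm : Commute TH TK := by
    unfold TH TK
    rw [Commute, SemiconjBy, smul_mul_smul_comm, smul_mul_smul_comm, mul_comm ((2:ℂ)⁻¹)]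
    congr 1
    simp only [mul_sub, sub_mul, mul_add, add_mul]
    rw [hnormal]
    abel
  have hsumT : T = TH + Complex.I • TK := by
    unfold TH TK
    rw [smul_smul]
    have h : Complex.I * (2 * Complex.I)⁻¹ = (2:ℂ)⁻¹ := by
      rw [mul_inv, ← mul_assoc]
      rw [mul_comm Complex.I, mul_assoc, Complex.mul_inv_cancel Complex.I_ne_zero, mul_one]
    rw [h]
    module
  -- eigenvalue set
  set s : Set ℂ := spectrum ℂ T with hs
  haveI : Fintype s := hfin.fintype
  have heig : ∀ μ : ℂ, μ ∈ s ↔ eigenspace T μ ≠ ⊥ := fun μ =>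
    (Module.End.hasEigenvalue_iff_mem_spectrum.symm).trans Module.End.hasEigenvalue_iff
  set V : s → Submodule ℂ E := fun μ => eigenspace T μ.1 with hV
  have hOrth : OrthogonalFamily ℂ (fun μ : s => ↥(V μ)) (fun μ : s => (V μ).subtypeₗᵢ) := by
    intro i j hij v w
    exact orth i.1 j.1 (fun h => hij (Subtype.ext h)) v v.2 w w.2
  have hsup : (⨆ μ : s, V μ) = ⊤ := by
    have htop := LinearMap.IsSymmetric.iSup_iSup_eigenspace_inf_eigenspace_eq_top_of_commute
      hTHsym hTKsym hcomm
    rw [← top_le_iff, ← htop]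
    refine iSup_le fun α => iSup_le fun γ => ?_
    by_cases hbot : eigenspace TH α ⊓ eigenspace TK γ = ⊥
    · rw [hbot]; exact bot_le
    · have hle : eigenspace TH α ⊓ eigenspace TK γ ≤ eigenspace T (α + Complex.I * γ) := by
        intro x hx
        rw [mem_eigenspace_iff]
        have h1 := mem_eigenspace_iff.mp hx.1
        have h2 := mem_eigenspace_iff.mp hx.2
        rw [hsumT]
        simp only [LinearMap.add_apply, LinearMap.smul_apply, h1, h2, add_smul, smul_smul]
      have hmem : (α + Complex.I * γ) ∈ s := by
        rw [heig]
        intro hb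
        exact hbot (le_bot_iff.mp (hle.trans hb.le))
      exact hle.trans (le_iSup (fun μ : s => V μ) ⟨_, hmem⟩)
  have hInternal : DirectSum.IsInternal V := by
    apply hOrth.isInternal_iff.mpr
    rw [hsup, Submodule.top_orthogonal_eq_bot]
  let b := hInternal.collectedOrthonormalBasis hOrth (fun μ => stdOrthonormalBasis ℂ (V μ))
  have hb_mem : ∀ i, b i ∈ V i.1 := fun i =>
    hInternal.collectedOrthonormalBasis_mem hOrth (fun μ => stdOrthonormalBasis ℂ (V μ)) i
  have hb_eig : ∀ i, T (b i) = (i.1.1 : ℂ) • b i := fun i => mem_eigenspace_iff.mp (hb_mem i)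
  have hb_on : ∀ μ ∈ (Finset.univ : Finset (Σ μ : s, Fin (Module.finrank ℂ ↥(V μ)))),
      ∀ ν ∈ (Finset.univ : Finset (Σ μ : s, Fin (Module.finrank ℂ ↥(V μ)))),
      ⟪b μ, b ν⟫_ℂ = if μ = ν then 1 else 0 := fun μ _ ν _ =>
    orthonormal_iff_ite.mp b.orthonormal μ ν
  ext z
  simp only [Set.mem_setOf_eq]
  constructor
  · rintro ⟨x, hx1, rfl⟩
    have hxsum : ∑ i, b.repr x i • b i = x := b.sum_repr x
    have hinner2 : ⟪x, x⟫_ℂ = ∑ i, conj (b.repr x i) * (b.repr x i) := by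
      have h := inner_sum_ortho Finset.univ b hb_on (fun i => b.repr x i) (fun i => b.repr x i)
      rw [hxsum] at h
      exact h
    have hTx : T x = ∑ i, ((b.repr x i) * i.1.1) • b i := by
      conv_lhs => rw [← hxsum]
      rw [map_sum]
      exact Finset.sum_congr rfl fun i _ => by rw [LinearMap.map_smul, hb_eig i, smul_smul]
    have hqf : ⟪x, T x⟫_ℂ = ∑ i, conj (b.repr x i) * ((b.repr x i) * i.1.1) := by
      have h := inner_sum_ortho Finset.univ b hb_on (fun i => b.repr x i)
        (fun i => b.repr x i * i.1.1)
      rw [hxsum, ← hTx] at h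
      exact h
    set w : (Σ μ : s, Fin (Module.finrank ℂ ↥(V μ))) → ℝ := fun i => ‖b.repr x i‖^2 with hw
    have hsumw : ∑ i, w i = 1 := by
      have h1 : ⟪x, x⟫_ℂ = 1 := by
        rw [@inner_self_eq_norm_sq_to_K ℂ, hx1]; norm_num
      rw [h1] at hinner2
      have hc : ∀ i, conj (b.repr x i) * (b.repr x i) = ((w i : ℝ) : ℂ) := by
        intro i; rw [RCLike.conj_mul]; norm_cast
      rw [Finset.sum_congr rfl (fun i _ => hc i)] at hinner2
      exact_mod_cast hinner2.symm
    have hqf2 : ⟪x, T x⟫_ℂ = ∑ i, w i • (i.1.1 : ℂ) := by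
      rw [hqf]
      refine Finset.sum_congr rfl fun i _ => ?_
      rw [Complex.real_smul, ← mul_assoc, RCLike.conj_mul, hw]
      norm_cast
    rw [hqf2, ← Finset.centerMass_eq_of_sum_1 _ _ hsumw]
    exact Finset.centerMass_mem_convexHull _ (fun i _ => sq_nonneg _)
      (by rw [hsumw]; norm_num) (fun i _ => i.1.2)
  · intro hz
    rw [_root_.convexHull_eq] at hz
    obtain ⟨ι', t, wgt, p, hw0, hw1, hp, hcm⟩ := hz
    set S : Finset ℂ := hfin.toFinset with hS
    have hmaps : ∀ i ∈ t, p i ∈ S := fun i hi => hfin.mem_toFinset.mpr (hp i hi)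
    set W : ℂ → ℝ := fun μ => ∑ i ∈ t.filter (fun i => p i = μ), wgt i with hW
    have hW0 : ∀ μ, 0 ≤ W μ := fun μ =>
      Finset.sum_nonneg fun i hi => hw0 i (Finset.mem_filter.mp hi).1
    have hW1 : ∑ μ ∈ S, W μ = 1 :=
      (Finset.sum_fiberwise_of_maps_to hmaps wgt).trans hw1
    have hzval : ∑ μ ∈ S, W μ • μ = z := by
      have h2 : ∑ μ ∈ S, ∑ i ∈ t.filter (fun i => p i = μ), (wgt i • p i)
          = ∑ i ∈ t, wgt i • p i := Finset.sum_fiberwise_of_maps_to hmaps _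
      rw [← hcm, Finset.centerMass_eq_of_sum_1 _ _ hw1, ← h2]
      refine Finset.sum_congr rfl fun μ _ => ?_
      have e1 : ∑ i ∈ t.filter (fun i => p i = μ), wgt i • p i
          = ∑ i ∈ t.filter (fun i => p i = μ), wgt i • μ :=
        Finset.sum_congr rfl fun i hi => by rw [(Finset.mem_filter.mp hi).2]
      rw [e1, ← Finset.sum_smul]
    have hpos : ∀ μ : s, 0 < Module.finrank ℂ ↥(V μ) := by
      intro μ
      have hne : V μ ≠ ⊥ := (heig μ.1).mp μ.2
      exact Nat.pos_of_ne_zero (fun h => hne (Submodule.finrank_eq_zero.mp h))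
    set v : ℂ → E := fun μ =>
      if h : μ ∈ s then b ⟨⟨μ, h⟩, ⟨0, hpos ⟨μ, h⟩⟩⟩ else 0 with hv
    have hvS : ∀ μ ∈ S, ∀ ν ∈ S, ⟪v μ, v ν⟫_ℂ = if μ = ν then 1 else 0 := by
      intro μ hμ ν hν
      have hμs : μ ∈ s := hfin.mem_toFinset.mp hμ
      have hνs : ν ∈ s := hfin.mem_toFinset.mp hν
      rw [hv]
      simp only [dif_pos hμs, dif_pos hνs]
      by_cases h : μ = ν
      · subst h
        simp [orthonormal_iff_ite.mp b.orthonormal]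
      · rw [orthonormal_iff_ite.mp b.orthonormal, if_neg, if_neg h]
        intro hcon
        exact h (congrArg (fun q => (Sigma.fst q).1) hcon)
    have hveig : ∀ μ ∈ S, T (v μ) = μ • v μ := by
      intro μ hμ
      have hμs : μ ∈ s := hfin.mem_toFinset.mp hμ
      rw [hv]
      simp only [dif_pos hμs]
      exact hb_eig ⟨⟨μ, hμs⟩, ⟨0, hpos ⟨μ, hμs⟩⟩⟩
    refine ⟨∑ μ ∈ S, ((Real.sqrt (W μ) : ℝ) : ℂ) • v μ, ?_, ?_⟩
    · have hxx : ⟪∑ μ ∈ S, ((Real.sqrt (W μ) : ℝ) : ℂ) • v μ,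
          ∑ μ ∈ S, ((Real.sqrt (W μ) : ℝ) : ℂ) • v μ⟫_ℂ = 1 := by
        rw [inner_sum_ortho S v hvS _ _]
        have hc : ∀ μ ∈ S, conj ((Real.sqrt (W μ) : ℂ)) * (Real.sqrt (W μ) : ℂ)
            = ((W μ : ℝ) : ℂ) := by
          intro μ _
          rw [Complex.conj_ofReal, ← Complex.ofReal_mul, Real.mul_self_sqrt (hW0 μ)]
        rw [Finset.sum_congr rfl hc, ← Complex.ofReal_sum, hW1, Complex.ofReal_one]
      have h2 : ‖∑ μ ∈ S, ((Real.sqrt (W μ) : ℝ) : ℂ) • v μ‖^2 = 1 := by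
        have h3 : RCLike.re (⟪∑ μ ∈ S, ((Real.sqrt (W μ) : ℝ) : ℂ) • v μ,
            ∑ μ ∈ S, ((Real.sqrt (W μ) : ℝ) : ℂ) • v μ⟫_ℂ) = 1 := by rw [hxx]; simp
        rwa [inner_self_eq_norm_sq] at h3
      nlinarith [norm_nonneg (∑ μ ∈ S, ((Real.sqrt (W μ) : ℝ) : ℂ) • v μ)]
    · have hTx : T (∑ μ ∈ S, ((Real.sqrt (W μ) : ℝ) : ℂ) • v μ)
          = ∑ ν ∈ S, (((Real.sqrt (W ν) : ℝ) : ℂ) * ν) • v ν := by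
        rw [map_sum]
        refine Finset.sum_congr rfl fun ν hν => ?_
        rw [LinearMap.map_smul, hveig ν hν, smul_smul]
      rw [hTx, inner_sum_ortho S v hvS _ _, ← hzval]
      refine Finset.sum_congr rfl fun μ hμ => ?_
      rw [Complex.conj_ofReal, Complex.real_smul, ← mul_assoc, ← Complex.ofReal_mul,
        Real.mul_self_sqrt (hW0 μ)]


/-- for a normal matrix A (A*A = AA*), the field of values equals the
convex hull of the spectrum. -/
theorem numericalRange_of_normal (n : ℕ) (hn : 1 ≤ n)
    (A : Matrix (Fin n) (Fin n) ℂ) (hA : Aᴴ * A = A * Aᴴ) :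
    numericalRange A = convexHull ℝ (spectrum ℂ A) := by
  classical
  set T : EuclideanSpace ℂ (Fin n) →ₗ[ℂ] EuclideanSpace ℂ (Fin n) :=
    Matrix.toEuclideanLin A with hT
  have hadj : LinearMap.adjoint T = Matrix.toEuclideanLin Aᴴ :=
    (Matrix.toEuclideanLin_conjTranspose_eq_adjoint A).symm
  have hmul : ∀ (M N : Matrix (Fin n) (Fin n) ℂ),
      Matrix.toEuclideanLin (M * N) = Matrix.toEuclideanLin M * Matrix.toEuclideanLin N := by
    intro M N
    ext x
    simp [Matrix.toEuclideanLin_apply, Matrix.mulVec_mulVec]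
  have hnormal : LinearMap.adjoint T * T = T * LinearMap.adjoint T := by
    rw [hadj, hT, ← hmul, ← hmul, hA]
  have hspec : spectrum ℂ T = spectrum ℂ A :=
    AlgEquiv.spectrum_eq (Matrix.toLinAlgEquiv (PiLp.basisFun 2 ℂ (Fin n))) _
  have hfin : (spectrum ℂ T).Finite := hspec ▸ Matrix.finite_spectrum A
  have h := aux_numRange T hnormal hfin
  rw [hspec] at h
  exact h
end

section
/- (Zero stability of the 2_2b difference formula) Consider the real polynomial p₄(X) = 8X⁴ + X³ − 6X² − 5X + 2, the characteristic polynomial of the look-ahead finite difference scheme 2_2b. Then: (a) p₄(X) = (X − 1)(8X³ + 9X² + 3X − 2); (b) 1 is a root of p₄ of multiplicity exactly one; and (c) every complex root z of p₄ with z ≠ 1 satisfies |z| < 1. In particular all roots of p₄ lie in the closed unit disk of ℂ and the only root on the unit circle is the simple root 1, so p₄ is a convergent (zero-stable) characteristic polynomial. -/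
open Polynomial

/-- Any complex root of the cubic factor 8X³+9X²+3X−2 lies strictly inside the unit disk. -/
lemma cubic_abs_lt_one_aux (z : ℂ) (h : 8*z^3 + 9*z^2 + 3*z - 2 = 0) :
    ‖z‖ < 1 := by
  rw [Complex.ext_iff] at h
  obtain ⟨hre, him⟩ := h
  simp only [Complex.add_re, Complex.add_im, Complex.sub_re, Complex.sub_im,
    Complex.mul_re, Complex.mul_im, Complex.re_ofNat, Complex.im_ofNat, Complex.zero_re,
    Complex.zero_im, pow_succ, pow_zero, one_mul] at hre him
  ring_nf at hre him
  set x := z.re with hx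
  set y := z.im with hy
  have hsq : x^2 + y^2 < 1 := by
    rcases eq_or_ne y 0 with hy0 | hy0
    · -- real root case
      rw [hy0] at hre ⊢
      have h1 : x < 1 := by nlinarith [sq_nonneg x, sq_nonneg (x-1), sq_nonneg (x+1)]
      have h2 : -1 < x := by nlinarith [sq_nonneg (16*x+1), sq_nonneg x, sq_nonneg (x+1)]
      nlinarith
    · -- complex pair case
      have him' : 24*x^2 - 8*y^2 + 18*x + 3 = 0 := by
        rcases mul_eq_zero.mp (show y * (24*x^2 - 8*y^2 + 18*x + 3) = 0 by
          linear_combination him) with h | h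
        · exact absurd h hy0
        · exact h
      have hyv : y^2 = 3*x^2 + (18*x+3)/8 := by linarith
      have hcub : 512*x^3 + 576*x^2 + 210*x + 43 = 0 := by nlinarith [hre, hyv]
      have hx0 : x < 0 := by nlinarith [sq_nonneg x]
      have hx1 : -3/4 < x := by nlinarith [sq_nonneg (16*x+3)]
      rw [hyv]
      nlinarith [mul_pos (by linarith : (0:ℝ) < -x) (by linarith : (0:ℝ) < 4*x+3)]
  have habs : ‖z‖ ^ 2 < 1 := by
    rw [Complex.sq_norm, Complex.normSq_apply]
    nlinarith [hsq]
  nlinarith [norm_nonneg z, habs]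

/-- zero stability of the 2_2b difference formula: for
p₄(X) = 8X⁴ + X³ − 6X² − 5X + 2 we have (a) p₄ = (X−1)(8X³+9X²+3X−2); (b) 1 is a root of
multiplicity exactly one; (c) every complex root z ≠ 1 of p₄ satisfies |z| < 1; in
particular all roots lie in the closed unit disk and the only root on the unit circle is
the simple root 1, so p₄ is convergent (zero stable). -/
theorem zero_stability_2_2b (p : Polynomial ℝ)
    (hp : p = 8 * X ^ 4 + X ^ 3 - 6 * X ^ 2 - 5 * X + 2) :
    p = (X - 1) * (8 * X ^ 3 + 9 * X ^ 2 + 3 * X - 2) ∧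
      p.rootMultiplicity 1 = 1 ∧
      (∀ z : ℂ, Polynomial.aeval z p = 0 → z ≠ 1 → ‖z‖ < 1) ∧
      (∀ z : ℂ, Polynomial.aeval z p = 0 → ‖z‖ ≤ 1) ∧
      (∀ z : ℂ, Polynomial.aeval z p = 0 → ‖z‖ = 1 → z = 1) := by
  have hfac : p = (X - 1) * (8 * X ^ 3 + 9 * X ^ 2 + 3 * X - 2) := by rw [hp]; ring
  have hfacC : p = (X - C 1) * (8 * X ^ 3 + 9 * X ^ 2 + 3 * X - 2) := by
    rw [hfac, map_one]
  have hq1 : ((8 * X ^ 3 + 9 * X ^ 2 + 3 * X - 2 : Polynomial ℝ)).eval 1 = 18 := by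
    norm_num
  have hqne : (8 * X ^ 3 + 9 * X ^ 2 + 3 * X - 2 : Polynomial ℝ) ≠ 0 := by
    intro h0
    rw [h0] at hq1
    simp at hq1
  have hpne : p ≠ 0 := by
    rw [hfacC]
    exact mul_ne_zero (X_sub_C_ne_zero 1) hqne
  have hmult : p.rootMultiplicity 1 = 1 := by
    rw [hfacC, Polynomial.rootMultiplicity_mul (by rw [← hfacC]; exact hpne)]
    rw [Polynomial.rootMultiplicity_X_sub_C_self,
      Polynomial.rootMultiplicity_eq_zero (by simp [Polynomial.IsRoot, hq1])]
  have hroot : ∀ z : ℂ, Polynomial.aeval z p = 0 → z ≠ 1 → ‖z‖ < 1 := by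
    intro z hz hz1
    rw [hfac] at hz
    simp only [map_mul, map_add, map_sub, map_pow, map_ofNat, aeval_X, aeval_one] at hz
    rcases mul_eq_zero.mp hz with h | h
    · exact absurd (by linear_combination h) hz1
    · exact cubic_abs_lt_one_aux z (by linear_combination h)
  refine ⟨hfac, hmult, hroot, ?_, ?_⟩
  · intro z hz
    rcases eq_or_ne z 1 with rfl | hz1
    · simp
    · exact le_of_lt (hroot z hz hz1)
  · intro z hz habs
    by_contra hz1
    exact absurd habs (ne_of_lt (hroot z hz hz1))
end
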